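/- Let m ≥ 1 be an integer and τ > 0. Define G : ℝ^m → ℝ by G(u) = |u|²/(2τ) − (e^τ/(τ(e^{2τ} − 1))) ((1 + (e^{2τ} − 1)|u|²)^{1/2} − 1), and define g : ℝ^m → ℝ^m by g(u) = (1/τ) u − (e^τ/(τ ((e^{2τ} − 1)|u|² + 1)^{1/2})) u. Then for all u, v ∈ ℝ^m: −⟨g(u), v − u⟩ ≤ G(u) − G(v) + |v − u|²/(2τ). -/

import Mathlib

theorem aux_stmt5 (τ E c su sv p a b : ℝ) (hτ : 0 < τ) (hE : 0 < E) (hc : 0 < c)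
    (hsu : 0 ≤ su) (hsv : 0 ≤ sv) (hcs : p^2 ≤ su*sv) (h2p : 2*p ≤ su + sv)
    (ha2 : a^2 = 1 + c*su) (hb2 : b^2 = 1 + c*sv) (ha1 : 1 ≤ a) (hb1 : 1 ≤ b) :
    -(1/τ * (p - su) - E/(τ*a) * (p - su)) ≤
      (su/(2*τ) - E/(τ*c) * (a - 1)) - (sv/(2*τ) - E/(τ*c) * (b - 1))
        + (sv - 2*p + su)/(2*τ) := by
  have hsq : (1 + c*p)^2 ≤ (a*b)^2 := by
    nlinarith [mul_nonneg (mul_nonneg hc.le hc.le) (sub_nonneg.2 hcs),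
      mul_nonneg hc.le (sub_nonneg.2 h2p)]
  have hab1 : (1:ℝ) ≤ a*b := le_trans ha1 (le_mul_of_one_le_right (by linarith) hb1)
  have hab : c*p + 1 ≤ a*b := by nlinarith
  have hkey : E/(τ*a) * (p - su) ≤ E/(τ*c) * (b - a) := by
    rw [div_mul_eq_mul_div, div_mul_eq_mul_div,
      div_le_div_iff₀ (by positivity) (by positivity)]
    linarith [mul_le_mul_of_nonneg_left
      (show c*(p - su) ≤ a*b - a^2 by linarith [hab, ha2])
      (show (0:ℝ) ≤ E * τ by positivity)]
  have e1 : -(1/τ * (p - su) - E/(τ*a) * (p - su))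
      = (su - p)/τ + E/(τ*a) * (p - su) := by ring
  have e2 : (su/(2*τ) - E/(τ*c) * (a - 1)) - (sv/(2*τ) - E/(τ*c) * (b - 1))
      + (sv - 2*p + su)/(2*τ)
      = (su - p)/τ + E/(τ*c) * (b - a) := by
    field_simp
    ring
  linarith [hkey]

/-- The key convexity-type inequality for the modified potential `G` and its
gradient `g`: for all `u, v ∈ ℝ^m`, `-⟨g(u), v - u⟩ ≤ G(u) - G(v) + |v - u|²/(2τ)`. -/
theorem stmt_5 (m : ℕ) (hm : 1 ≤ m) (τ : ℝ) (hτ : 0 < τ)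
    (G : EuclideanSpace ℝ (Fin m) → ℝ)
    (hG : ∀ u : EuclideanSpace ℝ (Fin m),
      G u = ‖u‖ ^ 2 / (2 * τ) -
        (Real.exp τ / (τ * (Real.exp (2 * τ) - 1))) *
          (Real.sqrt (1 + (Real.exp (2 * τ) - 1) * ‖u‖ ^ 2) - 1))
    (g : EuclideanSpace ℝ (Fin m) → EuclideanSpace ℝ (Fin m))
    (hg : ∀ u : EuclideanSpace ℝ (Fin m),
      g u = (1 / τ) • u -
        (Real.exp τ / (τ * Real.sqrt ((Real.exp (2 * τ) - 1) * ‖u‖ ^ 2 + 1))) • u) :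
    ∀ u v : EuclideanSpace ℝ (Fin m),
      -(inner ℝ (g u) (v - u) : ℝ) ≤ G u - G v + ‖v - u‖ ^ 2 / (2 * τ) := by
  intro u v
  have hE : (0:ℝ) < Real.exp τ := Real.exp_pos τ
  have hc : (0:ℝ) < Real.exp (2 * τ) - 1 := by
    have h1 : Real.exp 0 < Real.exp (2 * τ) := Real.exp_lt_exp.mpr (by linarith)
    rw [Real.exp_zero] at h1; linarith
  have habs : |(inner ℝ u v : ℝ)| ≤ ‖u‖ * ‖v‖ := abs_real_inner_le_norm u v
  have hcs : (inner ℝ u v : ℝ)^2 ≤ ‖u‖^2 * ‖v‖^2 := by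
    have h := pow_le_pow_left₀ (abs_nonneg _) habs 2
    rw [sq_abs, mul_pow] at h
    linarith [h]
  have h2p : 2 * (inner ℝ u v : ℝ) ≤ ‖u‖^2 + ‖v‖^2 := by
    nlinarith [le_abs_self (inner ℝ u v : ℝ), sq_nonneg (‖u‖ - ‖v‖),
      norm_nonneg u, norm_nonneg v]
  have ha2 : (Real.sqrt (1 + (Real.exp (2 * τ) - 1) * ‖u‖^2))^2
      = 1 + (Real.exp (2 * τ) - 1) * ‖u‖^2 := Real.sq_sqrt (by positivity)
  have hb2 : (Real.sqrt (1 + (Real.exp (2 * τ) - 1) * ‖v‖^2))^2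
      = 1 + (Real.exp (2 * τ) - 1) * ‖v‖^2 := Real.sq_sqrt (by positivity)
  have ha1 : (1:ℝ) ≤ Real.sqrt (1 + (Real.exp (2 * τ) - 1) * ‖u‖^2) := by
    have h := Real.sqrt_le_sqrt
      (show (1:ℝ) ≤ 1 + (Real.exp (2 * τ) - 1) * ‖u‖^2 by
        nlinarith [mul_nonneg hc.le (sq_nonneg ‖u‖)])
    rwa [Real.sqrt_one] at h
  have hb1 : (1:ℝ) ≤ Real.sqrt (1 + (Real.exp (2 * τ) - 1) * ‖v‖^2) := by
    have h := Real.sqrt_le_sqrt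
      (show (1:ℝ) ≤ 1 + (Real.exp (2 * τ) - 1) * ‖v‖^2 by
        nlinarith [mul_nonneg hc.le (sq_nonneg ‖v‖)])
    rwa [Real.sqrt_one] at h
  rw [hg u, hG u, hG v,
    show (Real.exp (2 * τ) - 1) * ‖u‖^2 + 1
      = 1 + (Real.exp (2 * τ) - 1) * ‖u‖^2 from by ring,
    inner_sub_left, real_inner_smul_left, real_inner_smul_left, inner_sub_right,
    real_inner_self_eq_norm_sq, norm_sub_sq_real, real_inner_comm u v]
  exact aux_stmt5 τ (Real.exp τ) (Real.exp (2 * τ) - 1) (‖u‖^2) (‖v‖^2)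
    (inner ℝ u v) _ _ hτ hE hc (by positivity) (by positivity) hcs h2p ha2 hb2 ha1 hb1
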